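/- For any nonzero f ∈ ℂ[x] of degree d and any positive integer n, ht(f^n) satisfies |f|_∘^n / (1 + n·d) ≤ ht(f^n) ≤ |f|_∘^n, where |f|_∘ = max over θ ∈ [0,1) of |f(e^{2πiθ})| is the maximum modulus of f on the unit circle. -/

import Mathlib

open Polynomial

/-- Height: maximum absolute value of a coefficient. -/
noncomputable def ht (p : Polynomial ℂ) : ℝ := ⨆ i, ‖p.coeff i‖

/-- Maximum modulus of `f` on the unit circle. -/
noncomputable def circleNorm (f : Polynomial ℂ) : ℝ :=
  sSup { r : ℝ | ∃ z : ℂ, ‖z‖ = 1 ∧ r = ‖f.eval z‖ }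

lemma circleSet_eq (f : Polynomial ℂ) :
    { r : ℝ | ∃ z : ℂ, ‖z‖ = 1 ∧ r = ‖f.eval z‖ }
      = (fun z => ‖f.eval z‖) '' (Metric.sphere (0 : ℂ) 1) := by
  ext r
  simp only [Set.mem_setOf_eq, Set.mem_image, Metric.mem_sphere, dist_zero_right]
  exact ⟨fun ⟨z, h1, h2⟩ => ⟨z, h1, h2.symm⟩, fun ⟨z, h1, h2⟩ => ⟨z, h1, h2.symm⟩⟩

lemma circleSet_compact (f : Polynomial ℂ) :
    IsCompact { r : ℝ | ∃ z : ℂ, ‖z‖ = 1 ∧ r = ‖f.eval z‖ } := by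
  rw [circleSet_eq]
  exact (isCompact_sphere 0 1).image (continuous_norm.comp (f.continuous_aeval))

lemma circleSet_nonempty (f : Polynomial ℂ) :
    { r : ℝ | ∃ z : ℂ, ‖z‖ = 1 ∧ r = ‖f.eval z‖ }.Nonempty :=
  ⟨‖f.eval 1‖, 1, by simp⟩

lemma circleNorm_mem (f : Polynomial ℂ) :
    ∃ z : ℂ, ‖z‖ = 1 ∧ circleNorm f = ‖f.eval z‖ :=
  (circleSet_compact f).sSup_mem (circleSet_nonempty f)

lemma le_circleNorm (f : Polynomial ℂ) {z : ℂ} (hz : ‖z‖ = 1) :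
    ‖f.eval z‖ ≤ circleNorm f :=
  le_csSup (circleSet_compact f).bddAbove ⟨z, hz, rfl⟩

lemma circleNorm_nonneg (f : Polynomial ℂ) : 0 ≤ circleNorm f := by
  obtain ⟨z, _, h⟩ := circleNorm_mem f
  rw [h]; exact norm_nonneg _

lemma circleNorm_pow (f : Polynomial ℂ) (n : ℕ) :
    circleNorm (f ^ n) = circleNorm f ^ n := by
  apply le_antisymm
  · obtain ⟨z, hz, h⟩ := circleNorm_mem (f ^ n)
    rw [h, eval_pow, norm_pow]
    exact pow_le_pow_left₀ (norm_nonneg _) (le_circleNorm f hz) n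
  · obtain ⟨z, hz, h⟩ := circleNorm_mem f
    calc circleNorm f ^ n = ‖(f ^ n).eval z‖ := by rw [h, eval_pow, norm_pow]
    _ ≤ circleNorm (f ^ n) := le_circleNorm _ hz

lemma ht_bddAbove (g : Polynomial ℂ) :
    BddAbove (Set.range fun i => ‖g.coeff i‖) := by
  refine ⟨∑ i ∈ Finset.range (g.natDegree + 1), ‖g.coeff i‖, ?_⟩
  rintro r ⟨i, rfl⟩
  show ‖g.coeff i‖ ≤ _
  by_cases hi : i ≤ g.natDegree
  · exact Finset.single_le_sum (f := fun j => ‖g.coeff j‖)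
      (fun j _ => norm_nonneg _) (Finset.mem_range.mpr (Nat.lt_succ_of_le hi))
  · rw [g.coeff_eq_zero_of_natDegree_lt (lt_of_not_ge hi), norm_zero]
    exact Finset.sum_nonneg fun j _ => norm_nonneg _

lemma abs_coeff_le_ht (g : Polynomial ℂ) (i : ℕ) : ‖g.coeff i‖ ≤ ht g :=
  le_ciSup (ht_bddAbove g) i

lemma ht_nonneg (g : Polynomial ℂ) : 0 ≤ ht g :=
  le_trans (norm_nonneg _) (abs_coeff_le_ht g 0)

/-- DFT inversion: coefficient bound via roots of unity. -/
lemma abs_coeff_le_circleNorm (g : Polynomial ℂ) (i : ℕ) :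
    ‖g.coeff i‖ ≤ circleNorm g := by
  by_cases hi : i ≤ g.natDegree
  swap
  · rw [g.coeff_eq_zero_of_natDegree_lt (lt_of_not_ge hi), norm_zero]
    exact circleNorm_nonneg g
  set N := g.natDegree + 1 with hN
  have hN0 : N ≠ 0 := Nat.succ_ne_zero _
  set ω : ℂ := Complex.exp (2 * Real.pi * Complex.I / N) with hω
  have hprim : IsPrimitiveRoot ω N := Complex.isPrimitiveRoot_exp N hN0
  have hωN : ω ^ N = 1 := hprim.pow_eq_one
  have habsω : ‖ω‖ = 1 := by
    rw [hω, Complex.norm_exp]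
    norm_num [Complex.div_re, Complex.mul_re, Complex.mul_im]
  have hiN : i < N := Nat.lt_succ_of_le hi
  -- key identity
  have key : ∑ k ∈ Finset.range N, g.eval (ω ^ k) * ω ^ (k * (N - i)) = (N : ℂ) * g.coeff i := by
    have heval : ∀ k, g.eval (ω ^ k) = ∑ j ∈ Finset.range N, g.coeff j * (ω ^ k) ^ j :=
      fun k => g.eval_eq_sum_range' (Nat.lt_succ_self _) _
    calc ∑ k ∈ Finset.range N, g.eval (ω ^ k) * ω ^ (k * (N - i))
        = ∑ k ∈ Finset.range N, ∑ j ∈ Finset.range N,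
            g.coeff j * ω ^ (k * (j + (N - i))) := by
          refine Finset.sum_congr rfl fun k _ => ?_
          rw [heval k, Finset.sum_mul]
          refine Finset.sum_congr rfl fun j _ => ?_
          rw [mul_assoc, ← pow_mul, ← pow_add, ← Nat.mul_add]
      _ = ∑ j ∈ Finset.range N, g.coeff j * ∑ k ∈ Finset.range N, (ω ^ (j + (N - i))) ^ k := by
          rw [Finset.sum_comm]
          refine Finset.sum_congr rfl fun j _ => ?_
          rw [Finset.mul_sum]
          refine Finset.sum_congr rfl fun k _ => ?_
          rw [← pow_mul, Nat.mul_comm]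
      _ = (N : ℂ) * g.coeff i := by
          rw [Finset.sum_eq_single i]
          · have hii : ω ^ (i + (N - i)) = 1 := by
              rw [Nat.add_sub_cancel' (le_of_lt hiN), hωN]
            rw [hii]
            simp [mul_comm]
          · intro j hj hji
            have hroot : ω ^ (j + (N - i)) ≠ 1 := by
              intro h
              rw [hprim.pow_eq_one_iff_dvd] at h
              obtain ⟨c, hc⟩ := h
              have hjN : j < N := Finset.mem_range.mp hj
              have h1 : 0 < j + (N - i) := by omega
              have h2 : j + (N - i) < 2 * N := by omega
              have hc2 : c < 2 := Nat.lt_of_mul_lt_mul_left (a := N) (by omega)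
              have hc1 : 0 < c := by
                rcases Nat.eq_zero_or_pos c with h0 | h0
                · subst h0; omega
                · exact h0
              interval_cases c
              omega
            have : ∑ k ∈ Finset.range N, (ω ^ (j + (N - i))) ^ k = 0 := by
              rw [geom_sum_eq hroot, ← pow_mul, Nat.mul_comm, pow_mul, hωN, one_pow,
                sub_self, zero_div]
            rw [this, mul_zero]
          · intro h
            exact absurd (Finset.mem_range.mpr hiN) h
  have hbound : ‖(N : ℂ) * g.coeff i‖ ≤ N * circleNorm g := by
    rw [← key]
    calc ‖∑ k ∈ Finset.range N, g.eval (ω ^ k) * ω ^ (k * (N - i))‖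
        ≤ ∑ k ∈ Finset.range N, ‖g.eval (ω ^ k) * ω ^ (k * (N - i))‖ :=
          norm_sum_le _ _
      _ ≤ ∑ k ∈ Finset.range N, circleNorm g := by
          refine Finset.sum_le_sum fun k _ => ?_
          rw [norm_mul, norm_pow, habsω, one_pow, mul_one]
          exact le_circleNorm g (by rw [norm_pow, habsω, one_pow])
      _ = N * circleNorm g := by rw [Finset.sum_const, Finset.card_range, nsmul_eq_mul]
  rw [norm_mul, Complex.norm_natCast] at hbound
  have hNpos : (0 : ℝ) < N := by positivity
  exact le_of_mul_le_mul_left hbound hNpos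

/-- For nonzero `f ∈ ℂ[x]` of degree `d` and `n ≥ 1`:
`|f|∘^n / (1 + n d) ≤ ht(f^n) ≤ |f|∘^n`. -/
theorem height_pow_circleNorm_bounds (f : Polynomial ℂ) (hf : f ≠ 0)
    (d : ℕ) (hd : f.natDegree = d) (n : ℕ) (hn : 1 ≤ n) :
    circleNorm f ^ n / (1 + n * d) ≤ ht (f ^ n) ∧ ht (f ^ n) ≤ circleNorm f ^ n := by
  constructor
  · -- lower bound
    have hdeg : (f ^ n).natDegree = n * d := by rw [natDegree_pow, hd]
    obtain ⟨z, hz, hmem⟩ := circleNorm_mem (f ^ n)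
    have heval : (f ^ n).eval z = ∑ j ∈ Finset.range (n * d + 1), (f ^ n).coeff j * z ^ j := by
      rw [← hdeg]; exact (f ^ n).eval_eq_sum_range' (Nat.lt_succ_self _) _
    have hle : circleNorm (f ^ n) ≤ (n * d + 1 : ℝ) * ht (f ^ n) := by
      rw [hmem, heval]
      calc ‖∑ j ∈ Finset.range (n * d + 1), (f ^ n).coeff j * z ^ j‖
          ≤ ∑ j ∈ Finset.range (n * d + 1), ‖(f ^ n).coeff j * z ^ j‖ :=
            norm_sum_le _ _
        _ ≤ ∑ j ∈ Finset.range (n * d + 1), ht (f ^ n) := by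
            refine Finset.sum_le_sum fun j _ => ?_
            rw [norm_mul, norm_pow, hz, one_pow, mul_one]
            exact abs_coeff_le_ht _ j
        _ = (n * d + 1 : ℝ) * ht (f ^ n) := by
            rw [Finset.sum_const, Finset.card_range, nsmul_eq_mul]; push_cast; ring
    rw [circleNorm_pow] at hle
    have hpos : (0 : ℝ) < 1 + n * d := by positivity
    rw [div_le_iff₀ hpos]
    calc circleNorm f ^ n ≤ (n * d + 1 : ℝ) * ht (f ^ n) := hle
      _ = ht (f ^ n) * (1 + n * d) := by ring
  · -- upper bound
    rw [← circleNorm_pow]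
    exact ciSup_le fun i => abs_coeff_le_circleNorm (f ^ n) i
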